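/- If 0 ≤ x ≤ 1/3, x ≤ y ≤ 1, and x + y ≥ 1, then 3(1-x)(x+y)^2 ≥ 4y + x - 1, and hence 3(1-x)(x+y)^2/(4y + x - 1) ≥ 1. -/
import Mathlib


theorem stmt_7 (x y : ℝ) (hx0 : 0 ≤ x) (hx : x ≤ 1/3) (hxy : x ≤ y) (hy : y ≤ 1)
    (hsum : 1 ≤ x + y) :
    3*(1-x)*(x+y)^2 ≥ 4*y + x - 1 ∧ 3*(1-x)*(x+y)^2/(4*y + x - 1) ≥ 1 := by
  have h1 : 3*(1-x)*(x+y)^2 ≥ 4*y + x - 1 := by nlinarith [sq_nonneg (x+y-1), sq_nonneg (y-1), sq_nonneg x, mul_nonneg hx0 (sub_nonneg.2 hy)]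
  have hpos : 0 < 4*y + x - 1 := by nlinarith
  exact ⟨h1, (le_div_iff₀ hpos).2 (by linarith)⟩
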